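/- arXiv:2303.02022 — 2 statements merged into one kernel-verified Lean document; each statement's English description precedes it below -/
import Mathlib

section
/- Let F be a formal group law over a commutative ring R, and suppose s, m are positive integers with sm ≡ 1 mod N. In the ring E = R[[y]]/([N](y)), the element [m](y) divides y. Consequently, any localization of E in which y is inverted also inverts [m](y). -/
open Finset

noncomputable section

variable {R : Type} [CommRing R]

/-- Substitution of two multivariate power series (with zero constant term) into a
two-variable power series `F`.  The coefficient of a monomial `d` only receives
contributions from pairs `(i, j)` with `i, j ≤ |d|`, so the sum below is finite and agrees
with the usual substitution `F(f, g)` whenever `f` and `g` have zero constant term. -/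
def subst2 {τ : Type} (F : MvPowerSeries (Fin 2) R) (f g : MvPowerSeries τ R) :
    MvPowerSeries τ R :=
  fun d =>
    ∑ ij ∈ range (d.sum fun _ n => n + 1) ×ˢ range (d.sum fun _ n => n + 1),
      MvPowerSeries.coeff (Finsupp.single 0 ij.1 + Finsupp.single 1 ij.2) F *
        MvPowerSeries.coeff d (f ^ ij.1 * g ^ ij.2)

/-- A (one-dimensional, commutative) formal group law over `R`: a two-variable power
series `F` with `F(x,0) = x`, `F(0,y) = y`, `F(x,y) = F(y,x)` and
`F(F(x,y),z) = F(x,F(y,z))`. -/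
structure FormalGroupLaw (R : Type) [CommRing R] where
  F : MvPowerSeries (Fin 2) R
  unit_left : ∀ n : ℕ, MvPowerSeries.coeff (Finsupp.single 0 n) F = if n = 1 then 1 else 0
  unit_right : ∀ n : ℕ, MvPowerSeries.coeff (Finsupp.single 1 n) F = if n = 1 then 1 else 0
  comm : ∀ i j : ℕ,
    MvPowerSeries.coeff (Finsupp.single 0 i + Finsupp.single 1 j) F =
      MvPowerSeries.coeff (Finsupp.single 0 j + Finsupp.single 1 i) F
  assoc : subst2 F (subst2 F (MvPowerSeries.X 0) (MvPowerSeries.X 1)) (MvPowerSeries.X 2) =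
    subst2 F (MvPowerSeries.X (0 : Fin 3)) (subst2 F (MvPowerSeries.X 1) (MvPowerSeries.X 2))

/-- The `m`-series `[m](y)` of a formal group law, defined by `[0](y) = 0` and
`[m](y) = F([m-1](y), y)`. -/
def FormalGroupLaw.mSeries (F : FormalGroupLaw R) : ℕ → PowerSeries R
  | 0 => 0
  | m + 1 => subst2 F.F (F.mSeries m) PowerSeries.X

/-- Substitution `f(g)` of a one-variable power series `g` into a one-variable power series
`f`; correct whenever `g` has zero constant term. -/
def substOne (f g : PowerSeries R) : PowerSeries R :=
  PowerSeries.mk fun n => ∑ i ∈ range (n + 1), PowerSeries.coeff i f * PowerSeries.coeff n (g ^ i)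

/-- total degree (weight) of a monomial -/
def wtF {τ : Type} (d : τ →₀ ℕ) : ℕ := d.sum fun _ n => n

lemma wtF_add {τ : Type} (d e : τ →₀ ℕ) : wtF (d + e) = wtF d + wtF e := by
  classical
  exact Finsupp.sum_add_index' (fun _ => rfl) (fun _ _ _ => rfl)

lemma wtF_eq_zero {τ : Type} {d : τ →₀ ℕ} (h : wtF d = 0) : d = 0 := by
  classical
  ext x
  by_cases hx : x ∈ d.support
  · have := Finset.sum_eq_zero_iff.mp h x hx
    simpa using this
  · simpa using Finsupp.notMem_support_iff.mp hx

lemma le_wtF {τ : Type} (d : τ →₀ ℕ) (i : τ) : d i ≤ wtF d := by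
  classical
  by_cases hi : i ∈ d.support
  · exact Finset.single_le_sum (f := fun x => d x) (fun _ _ => Nat.zero_le _) hi
  · simp [Finsupp.notMem_support_iff.mp hi]

def boxF (σ : Type) [Fintype σ] [DecidableEq σ] (n : ℕ) : Finset (σ →₀ ℕ) :=
  Finset.Iic (Finsupp.equivFunOnFinite.symm fun _ => n)

lemma mem_boxF {σ : Type} [Fintype σ] [DecidableEq σ] {n : ℕ} {e : σ →₀ ℕ} :
    e ∈ boxF σ n ↔ ∀ i, e i ≤ n := by
  simp [boxF, Finsupp.le_def]

lemma boxF_mono {σ : Type} [Fintype σ] [DecidableEq σ] {a b : ℕ} (h : a ≤ b) :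
    boxF σ a ⊆ boxF σ b := by
  intro e he
  rw [mem_boxF] at he ⊢
  exact fun i => le_trans (he i) h

open MvPowerSeries in
lemma coeff_pow_eq_zeroF {τ : Type} [DecidableEq τ] {f : MvPowerSeries τ R}
    (hf : constantCoeff f = 0) :
    ∀ (n : ℕ) (d : τ →₀ ℕ), wtF d < n → coeff d (f ^ n) = 0 := by
  intro n
  induction n with
  | zero => intro d hd; omega
  | succ n ih =>
    intro d hd
    rw [pow_succ, coeff_mul]
    apply Finset.sum_eq_zero
    rintro ⟨d1, d2⟩ hp
    rw [Finset.HasAntidiagonal.mem_antidiagonal] at hp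
    by_cases h2 : d2 = 0
    · subst h2
      simp [← coeff_zero_eq_constantCoeff] at hf
      simp [hf]
    · have : 1 ≤ wtF d2 := by
        rcases Nat.eq_zero_or_pos (wtF d2) with h | h
        · exact absurd (wtF_eq_zero h) h2
        · exact h
      have : wtF d1 < n := by
        have := wtF_add d1 d2
        rw [hp] at this; omega
      rw [ih d1 this, zero_mul]

open MvPowerSeries in
lemma coeff_prod_pow_eq_zeroF {σ τ : Type} [Fintype σ] [DecidableEq σ] [DecidableEq τ]
    {a : σ → MvPowerSeries τ R} (ha : ∀ i, constantCoeff (a i) = 0)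
    (e : σ → ℕ) :
    ∀ (s : Finset σ) (d : τ →₀ ℕ), wtF d < ∑ i ∈ s, e i →
      coeff d (∏ i ∈ s, a i ^ e i) = 0 := by
  intro s
  induction s using Finset.cons_induction with
  | empty => intro d hd; simp at hd
  | cons j s hj ih =>
    intro d hd
    rw [Finset.prod_cons, coeff_mul]
    apply Finset.sum_eq_zero
    rintro ⟨d1, d2⟩ hp
    rw [Finset.HasAntidiagonal.mem_antidiagonal] at hp
    rw [Finset.sum_cons] at hd
    have hw : wtF d1 + wtF d2 = wtF d := by rw [← hp, wtF_add]
    by_cases h1 : wtF d1 < e j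
    · rw [coeff_pow_eq_zeroF (ha j) _ _ h1, zero_mul]
    · have : wtF d2 < ∑ i ∈ s, e i := by omega
      rw [ih d2 this, mul_zero]

/-- evaluation of a multivariate power series at a family of power series with zero
constant term -/
def evF {σ τ : Type} [Fintype σ] [DecidableEq σ] (a : σ → MvPowerSeries τ R)
    (Φ : MvPowerSeries σ R) : MvPowerSeries τ R :=
  fun d => ∑ e ∈ boxF σ (wtF d),
    MvPowerSeries.coeff e Φ * MvPowerSeries.coeff d (∏ i, a i ^ e i)

lemma coeff_evF {σ τ : Type} [Fintype σ] [DecidableEq σ] (a : σ → MvPowerSeries τ R)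
    (Φ : MvPowerSeries σ R) (d : τ →₀ ℕ) :
    MvPowerSeries.coeff d (evF a Φ) = ∑ e ∈ boxF σ (wtF d),
      MvPowerSeries.coeff e Φ * MvPowerSeries.coeff d (∏ i, a i ^ e i) := rfl

lemma sum_univ_eq_wtF {σ : Type} [Fintype σ] [DecidableEq σ] (e : σ →₀ ℕ) :
    ∑ i, e i = wtF e :=
  (Finsupp.sum_fintype e (fun _ n => n) (fun _ => rfl)).symm

open MvPowerSeries in
lemma coeff_prod_zero_of_wt {σ τ : Type} [Fintype σ] [DecidableEq σ] [DecidableEq τ]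
    {a : σ → MvPowerSeries τ R} (ha : ∀ i, constantCoeff (a i) = 0)
    {e : σ →₀ ℕ} {d : τ →₀ ℕ} (h : wtF d < wtF e) :
    coeff d (∏ i, a i ^ e i) = 0 := by
  apply coeff_prod_pow_eq_zeroF ha (fun i => e i) Finset.univ d
  rw [sum_univ_eq_wtF]; exact h

open MvPowerSeries in
/-- the truncated sum computing `evF` can use any bound `M ≥ wtF d`. -/
lemma coeff_evF_eq {σ τ : Type} [Fintype σ] [DecidableEq σ] [DecidableEq τ]
    {a : σ → MvPowerSeries τ R} (ha : ∀ i, constantCoeff (a i) = 0)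
    (Φ : MvPowerSeries σ R) {d : τ →₀ ℕ} {M : ℕ} (h : wtF d ≤ M) :
    coeff d (evF a Φ) = ∑ e ∈ boxF σ M,
      coeff e Φ * coeff d (∏ i, a i ^ e i) := by
  rw [coeff_evF]
  apply Finset.sum_subset (boxF_mono h)
  intro e he hne
  rw [mem_boxF] at he
  have : ¬ ∀ i, e i ≤ wtF d := by simpa [mem_boxF] using hne
  push_neg at this
  obtain ⟨i, hi⟩ := this
  have : wtF d < wtF e := lt_of_lt_of_le hi (le_wtF e i)
  rw [coeff_prod_zero_of_wt ha this, mul_zero]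

open MvPowerSeries in
lemma prod_pow_addF {σ τ : Type} [Fintype σ] [DecidableEq σ]
    (a : σ → MvPowerSeries τ R) (e1 e2 : σ →₀ ℕ) :
    (∏ i, a i ^ (e1 + e2) i) = (∏ i, a i ^ e1 i) * ∏ i, a i ^ e2 i := by
  rw [← Finset.prod_mul_distrib]
  refine Finset.prod_congr rfl fun i _ => ?_
  rw [Finsupp.add_apply, pow_add]

open MvPowerSeries in
lemma evF_mul {σ τ : Type} [Fintype σ] [DecidableEq σ] [DecidableEq τ]
    {a : σ → MvPowerSeries τ R} (ha : ∀ i, constantCoeff (a i) = 0)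
    (Φ Ψ : MvPowerSeries σ R) : evF a (Φ * Ψ) = evF a Φ * evF a Ψ := by
  classical
  ext d
  set D := wtF d with hD
  set B := boxF σ D with hB
  have hdisj : (B : Set (σ →₀ ℕ)).PairwiseDisjoint Finset.HasAntidiagonal.antidiagonal := by
    intro e he e' he' hne
    simp only [Function.onFun]
    rw [Finset.disjoint_left]
    intro p hp hp'
    rw [Finset.HasAntidiagonal.mem_antidiagonal] at hp hp'
    exact hne (hp ▸ hp')
  have hsub : B.biUnion Finset.HasAntidiagonal.antidiagonal ⊆ B ×ˢ B := by
    intro p hp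
    rw [Finset.mem_biUnion] at hp
    obtain ⟨e, he, hpe⟩ := hp
    rw [Finset.HasAntidiagonal.mem_antidiagonal] at hpe
    rw [mem_boxF] at he
    rw [Finset.mem_product, mem_boxF, mem_boxF]
    constructor
    · intro i
      calc p.1 i ≤ p.1 i + p.2 i := Nat.le_add_right _ _
        _ = (p.1 + p.2) i := (Finsupp.add_apply _ _ _).symm
        _ ≤ D := hpe ▸ he i
    · intro i
      calc p.2 i ≤ p.1 i + p.2 i := Nat.le_add_left _ _
        _ = (p.1 + p.2) i := (Finsupp.add_apply _ _ _).symm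
        _ ≤ D := hpe ▸ he i
  have hvan : ∀ e : σ →₀ ℕ, e ∉ B →
      coeff d (∏ i, a i ^ e i) = 0 := by
    intro e he
    rw [hB, mem_boxF] at he
    push_neg at he
    obtain ⟨i, hi⟩ := he
    exact coeff_prod_zero_of_wt ha (lt_of_lt_of_le hi (le_wtF e i))
  calc coeff d (evF a (Φ * Ψ))
      = ∑ e ∈ B, coeff e (Φ * Ψ) * coeff d (∏ i, a i ^ e i) := coeff_evF _ _ _
    _ = ∑ e ∈ B, ∑ p ∈ Finset.HasAntidiagonal.antidiagonal e,
          coeff p.1 Φ * coeff p.2 Ψ * coeff d (∏ i, a i ^ (p.1 + p.2) i) := by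
        refine Finset.sum_congr rfl fun e _ => ?_
        rw [coeff_mul, Finset.sum_mul]
        refine Finset.sum_congr rfl fun p hp => ?_
        rw [Finset.HasAntidiagonal.mem_antidiagonal] at hp
        rw [hp]
    _ = ∑ p ∈ B.biUnion Finset.HasAntidiagonal.antidiagonal,
          coeff p.1 Φ * coeff p.2 Ψ * coeff d (∏ i, a i ^ (p.1 + p.2) i) :=
        (Finset.sum_biUnion hdisj).symm
    _ = ∑ p ∈ B ×ˢ B,
          coeff p.1 Φ * coeff p.2 Ψ * coeff d (∏ i, a i ^ (p.1 + p.2) i) := by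
        refine Finset.sum_subset hsub fun p hp hnp => ?_
        have : p.1 + p.2 ∉ B := by
          intro hmem
          exact hnp (Finset.mem_biUnion.mpr ⟨p.1 + p.2, hmem, Finset.HasAntidiagonal.mem_antidiagonal.mpr rfl⟩)
        rw [hvan _ this, mul_zero]
    _ = ∑ e1 ∈ B, ∑ e2 ∈ B,
          coeff e1 Φ * coeff e2 Ψ * coeff d (∏ i, a i ^ (e1 + e2) i) := by
        rw [Finset.sum_product]
    _ = ∑ e1 ∈ B, ∑ e2 ∈ B, coeff e1 Φ * coeff e2 Ψ *
          ∑ p ∈ Finset.HasAntidiagonal.antidiagonal d,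
            coeff p.1 (∏ i, a i ^ e1 i) * coeff p.2 (∏ i, a i ^ e2 i) := by
        refine Finset.sum_congr rfl fun e1 _ => Finset.sum_congr rfl fun e2 _ => ?_
        rw [prod_pow_addF, coeff_mul]
    _ = ∑ p ∈ Finset.HasAntidiagonal.antidiagonal d, ∑ e1 ∈ B, ∑ e2 ∈ B,
          coeff e1 Φ * coeff e2 Ψ *
            (coeff p.1 (∏ i, a i ^ e1 i) * coeff p.2 (∏ i, a i ^ e2 i)) := by
        refine Eq.trans (Finset.sum_congr rfl fun e1 _ => ?_) Finset.sum_comm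
        refine Eq.trans (Finset.sum_congr rfl fun e2 _ => Finset.mul_sum _ _ _) Finset.sum_comm
    _ = ∑ p ∈ Finset.HasAntidiagonal.antidiagonal d,
          (∑ e1 ∈ B, coeff e1 Φ * coeff p.1 (∏ i, a i ^ e1 i)) *
          (∑ e2 ∈ B, coeff e2 Ψ * coeff p.2 (∏ i, a i ^ e2 i)) := by
        refine Finset.sum_congr rfl fun p _ => ?_
        rw [Finset.sum_mul_sum]
        refine Finset.sum_congr rfl fun e1 _ => Finset.sum_congr rfl fun e2 _ => ?_
        ring
    _ = coeff d (evF a Φ * evF a Ψ) := by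
        rw [coeff_mul]
        refine Finset.sum_congr rfl fun p hp => ?_
        rw [Finset.HasAntidiagonal.mem_antidiagonal] at hp
        have h1 : wtF p.1 ≤ D := by
          have := wtF_add p.1 p.2; rw [hp] at this; omega
        have h2 : wtF p.2 ≤ D := by
          have := wtF_add p.1 p.2; rw [hp] at this; omega
        rw [coeff_evF_eq ha Φ h1, coeff_evF_eq ha Ψ h2]

open MvPowerSeries in
lemma evF_add {σ τ : Type} [Fintype σ] [DecidableEq σ] (a : σ → MvPowerSeries τ R)
    (Φ Ψ : MvPowerSeries σ R) : evF a (Φ + Ψ) = evF a Φ + evF a Ψ := by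
  classical
  ext d
  rw [map_add, coeff_evF, coeff_evF, coeff_evF, ← Finset.sum_add_distrib]
  refine Finset.sum_congr rfl fun e _ => ?_
  rw [map_add, add_mul]

open MvPowerSeries in
lemma evF_one {σ τ : Type} [Fintype σ] [DecidableEq σ] (a : σ → MvPowerSeries τ R) :
    evF a (1 : MvPowerSeries σ R) = 1 := by
  classical
  ext d
  rw [coeff_evF]
  rw [Finset.sum_eq_single (0 : σ →₀ ℕ)]
  · simp [coeff_one]
  · intro e _ hne
    rw [coeff_one, if_neg hne, zero_mul]
  · intro h
    exact absurd (mem_boxF.mpr fun i => by simp) h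

open MvPowerSeries in
lemma evF_zero {σ τ : Type} [Fintype σ] [DecidableEq σ] (a : σ → MvPowerSeries τ R) :
    evF a (0 : MvPowerSeries σ R) = 0 := by
  classical
  ext d
  rw [coeff_evF]
  simp

open MvPowerSeries in
/-- `evF a` as a ring homomorphism, when every `a i` has zero constant term. -/
def evFHom {σ τ : Type} [Fintype σ] [DecidableEq σ] [DecidableEq τ]
    (a : σ → MvPowerSeries τ R) (ha : ∀ i, constantCoeff (a i) = 0) :
    MvPowerSeries σ R →+* MvPowerSeries τ R where
  toFun := evF a
  map_one' := evF_one a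
  map_mul' := evF_mul ha
  map_zero' := evF_zero a
  map_add' := evF_add a

open MvPowerSeries in
lemma evF_X {σ τ : Type} [Fintype σ] [DecidableEq σ] [DecidableEq τ]
    {a : σ → MvPowerSeries τ R} (ha : ∀ i, constantCoeff (a i) = 0) (i : σ) :
    evF a (X i : MvPowerSeries σ R) = a i := by
  classical
  ext d
  rw [coeff_evF]
  rw [Finset.sum_eq_single (Finsupp.single i 1)]
  · rw [coeff_X, if_pos rfl, one_mul]
    congr 1
    rw [Finset.prod_eq_single i]
    · simp
    · intro j _ hj
      rw [Finsupp.single_apply, if_neg (by exact fun h => hj h.symm), pow_zero]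
    · intro h
      exact absurd (Finset.mem_univ i) h
  · intro e _ hne
    rw [coeff_X, if_neg hne, zero_mul]
  · intro h
    have h1 : ¬ (1 ≤ wtF d) := by
      intro h1
      exact h (mem_boxF.mpr fun j => by
        rw [Finsupp.single_apply]
        split <;> omega)
    have hd : d = 0 := wtF_eq_zero (by omega)
    subst hd
    rw [coeff_X, if_pos rfl, one_mul]
    have : (∏ j, a j ^ (Finsupp.single i 1) j) = a i := by
      rw [Finset.prod_eq_single i]
      · simp
      · intro j _ hj
        rw [Finsupp.single_apply, if_neg (by exact fun h => hj h.symm), pow_zero]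
      · intro h
        exact absurd (Finset.mem_univ i) h
    rw [this, coeff_zero_eq_constantCoeff, ha i]

open MvPowerSeries in
lemma constantCoeff_evF {σ τ : Type} [Fintype σ] [DecidableEq σ] [DecidableEq τ]
    {a : σ → MvPowerSeries τ R} (Φ : MvPowerSeries σ R)
    (hΦ : constantCoeff Φ = 0) :
    constantCoeff (evF a Φ) = 0 := by
  classical
  rw [← coeff_zero_eq_constantCoeff, coeff_evF]
  apply Finset.sum_eq_zero
  intro e he
  rw [mem_boxF] at he
  have h0 : wtF (0 : τ →₀ ℕ) = 0 := by simp [wtF]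
  have : e = 0 := by
    ext i
    have h1 := he i
    rw [h0] at h1
    simpa using h1
  subst this
  rw [← coeff_zero_eq_constantCoeff] at hΦ
  rw [hΦ, zero_mul]

open MvPowerSeries in
lemma evF_comp {σ σ' τ : Type} [Fintype σ] [DecidableEq σ] [Fintype σ'] [DecidableEq σ']
    [DecidableEq τ]
    {a : σ → MvPowerSeries τ R} (ha : ∀ i, constantCoeff (a i) = 0)
    {b : σ' → MvPowerSeries σ R} (hb : ∀ j, constantCoeff (b j) = 0)
    (Φ : MvPowerSeries σ' R) :
    evF a (evF b Φ) = evF (fun j => evF a (b j)) Φ := by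
  classical
  have hc : ∀ j, constantCoeff (evF a (b j)) = 0 :=
    fun j => constantCoeff_evF (a := a) (b j) (hb j)
  ext d
  set D := wtF d with hD
  set M := Fintype.card σ * D + D with hM
  have hboxwt : ∀ e : σ →₀ ℕ, e ∈ boxF σ D → wtF e ≤ M := by
    intro e he
    rw [mem_boxF] at he
    calc wtF e = ∑ i, e i := (sum_univ_eq_wtF e).symm
      _ ≤ ∑ _i : σ, D := Finset.sum_le_sum fun i _ => he i
      _ = Fintype.card σ * D := by rw [Finset.sum_const, Finset.card_univ, smul_eq_mul]
      _ ≤ M := Nat.le_add_right _ _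
  calc coeff d (evF a (evF b Φ))
      = ∑ e ∈ boxF σ D, coeff e (evF b Φ) * coeff d (∏ i, a i ^ e i) := coeff_evF _ _ _
    _ = ∑ e ∈ boxF σ D, (∑ u ∈ boxF σ' M,
          coeff u Φ * coeff e (∏ j, b j ^ u j)) * coeff d (∏ i, a i ^ e i) := by
        refine Finset.sum_congr rfl fun e he => ?_
        rw [coeff_evF_eq hb Φ (hboxwt e he)]
    _ = ∑ u ∈ boxF σ' M, coeff u Φ *
          ∑ e ∈ boxF σ D, coeff e (∏ j, b j ^ u j) * coeff d (∏ i, a i ^ e i) := by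
        refine Eq.trans (Finset.sum_congr rfl fun e _ => Finset.sum_mul _ _ _) ?_
        refine Eq.trans Finset.sum_comm ?_
        refine Finset.sum_congr rfl fun u _ => ?_
        rw [Finset.mul_sum]
        refine Finset.sum_congr rfl fun e _ => ?_
        ring
    _ = ∑ u ∈ boxF σ' M, coeff u Φ *
          coeff d (∏ j, (evF a (b j)) ^ u j) := by
        refine Finset.sum_congr rfl fun u _ => ?_
        congr 1
        have : evF a (∏ j, b j ^ u j) = ∏ j, (evF a (b j)) ^ u j := by
          have := map_prod (evFHom a ha) (fun j => b j ^ u j) Finset.univ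
          simp only [evFHom, RingHom.coe_mk, MonoidHom.coe_mk, OneHom.coe_mk] at this
          rw [this]
          exact Finset.prod_congr rfl fun j _ => by
            have := map_pow (evFHom a ha) (b j) (u j)
            simpa [evFHom] using this
        rw [← this, coeff_evF]
    _ = coeff d (evF (fun j => evF a (b j)) Φ) := by
        rw [coeff_evF_eq hc Φ (le_trans (Nat.le_refl D) (Nat.le_add_left _ _))]

lemma pair_eqF (e : Fin 2 →₀ ℕ) :
    e = Finsupp.single 0 (e 0) + Finsupp.single 1 (e 1) := by
  ext i
  fin_cases i <;> simp [Finsupp.single_apply]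

open MvPowerSeries in
lemma prod_pair_eqF (f g : MvPowerSeries τ R) (e : Fin 2 →₀ ℕ) :
    (∏ i, (![f, g] : Fin 2 → MvPowerSeries τ R) i ^ e i) = f ^ e 0 * g ^ e 1 := by
  rw [Fin.prod_univ_two]
  simp

open MvPowerSeries in
lemma coeff_pow_mul_pow_zeroF {τ : Type} [DecidableEq τ] {f g : MvPowerSeries τ R}
    (hf : constantCoeff f = 0) (hg : constantCoeff g = 0)
    {d : τ →₀ ℕ} {i j : ℕ} (h : wtF d < i + j) :
    coeff d (f ^ i * g ^ j) = 0 := by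
  rw [coeff_mul]
  apply Finset.sum_eq_zero
  rintro ⟨d1, d2⟩ hp
  rw [Finset.HasAntidiagonal.mem_antidiagonal] at hp
  have hw : wtF d1 + wtF d2 = wtF d := by rw [← hp, wtF_add]
  by_cases h1 : wtF d1 < i
  · rw [coeff_pow_eq_zeroF hf _ _ h1, zero_mul]
  · have : wtF d2 < j := by omega
    rw [coeff_pow_eq_zeroF hg _ _ this, mul_zero]

open MvPowerSeries in
lemma subst2_eq_evF {τ : Type} [DecidableEq τ] (F' : MvPowerSeries (Fin 2) R)
    (hF : coeff 0 F' = 0) {f g : MvPowerSeries τ R}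
    (hf : constantCoeff f = 0) (hg : constantCoeff g = 0) :
    subst2 F' f g = evF ![f, g] F' := by
  classical
  have hfg : ∀ i : Fin 2, constantCoeff ((![f, g] : Fin 2 → MvPowerSeries τ R) i) = 0 := by
    intro i; fin_cases i <;> simpa
  ext d
  have hL : coeff d (subst2 F' f g) =
      ∑ ij ∈ range (d.sum fun _ n => n + 1) ×ˢ range (d.sum fun _ n => n + 1),
        coeff (Finsupp.single 0 ij.1 + Finsupp.single 1 ij.2) F' *
          coeff d (f ^ ij.1 * g ^ ij.2) := rfl
  by_cases hd : d = 0
  · subst hd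
    have hB0 : ((0 : τ →₀ ℕ).sum fun _ n => n + 1) = 0 := by simp
    rw [hL, hB0]
    simp only [Finset.range_zero, Finset.empty_product, Finset.sum_empty]
    rw [coeff_zero_eq_constantCoeff]
    exact (constantCoeff_evF F' (by rwa [← coeff_zero_eq_constantCoeff])).symm
  -- d ≠ 0 : both sides equal the square sum with a large common bound K
  set D := wtF d with hD
  set B₀ := (d.sum fun _ n => n + 1) with hB₀
  have hB : D + 1 ≤ B₀ := by
    have h1 : B₀ = D + d.support.card := by
      rw [hB₀, hD, wtF, Finsupp.sum, Finsupp.sum, Finset.sum_add_distrib]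
      simp
    have h2 : 1 ≤ d.support.card := by
      rw [Nat.succ_le_iff, Finset.card_pos, Finsupp.support_nonempty_iff]
      exact hd
    omega
  set K := max B₀ (D + 1) with hK
  have sq_van : ∀ p : ℕ × ℕ, D < p.1 + p.2 →
      coeff (Finsupp.single 0 p.1 + Finsupp.single 1 p.2) F' *
        coeff d (f ^ p.1 * g ^ p.2) = 0 := by
    intro p hp
    rw [coeff_pow_mul_pow_zeroF hf hg hp, mul_zero]
  have hLK : coeff d (subst2 F' f g) =
      ∑ ij ∈ range K ×ˢ range K,
        coeff (Finsupp.single 0 ij.1 + Finsupp.single 1 ij.2) F' *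
          coeff d (f ^ ij.1 * g ^ ij.2) := by
    rw [hL]
    apply Finset.sum_subset
    · exact Finset.product_subset_product (Finset.range_subset_range.mpr (le_max_left _ _))
        (Finset.range_subset_range.mpr (le_max_left _ _))
    · rintro ⟨i, j⟩ _ hnp
      rw [Finset.mem_product, Finset.mem_range, Finset.mem_range] at hnp
      push_neg at hnp
      apply sq_van (i, j)
      by_cases hi : i < B₀
      · have := hnp hi; omega
      · omega
  have hRK : coeff d (evF ![f, g] F') =
      ∑ ij ∈ range K ×ˢ range K,
        coeff (Finsupp.single 0 ij.1 + Finsupp.single 1 ij.2) F' *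
          coeff d (f ^ ij.1 * g ^ ij.2) := by
    rw [coeff_evF]
    have step1 : ∑ e ∈ boxF (Fin 2) (wtF d),
        coeff e F' * coeff d (∏ i, (![f, g] : Fin 2 → MvPowerSeries τ R) i ^ e i) =
        ∑ ij ∈ range (D + 1) ×ˢ range (D + 1),
          coeff (Finsupp.single 0 ij.1 + Finsupp.single 1 ij.2) F' *
            coeff d (f ^ ij.1 * g ^ ij.2) := by
      refine Finset.sum_nbij' (fun e => (e 0, e 1))
        (fun p => Finsupp.single 0 p.1 + Finsupp.single 1 p.2) ?_ ?_ ?_ ?_ ?_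
      · intro e he
        rw [mem_boxF] at he
        rw [Finset.mem_product, Finset.mem_range, Finset.mem_range]
        constructor
        · have := he 0; omega
        · have := he 1; omega
      · rintro ⟨i, j⟩ hp
        rw [Finset.mem_product, Finset.mem_range, Finset.mem_range] at hp
        rw [mem_boxF]
        intro t
        fin_cases t <;> simp [Finsupp.single_apply] <;> omega
      · intro e _
        exact (pair_eqF e).symm
      · rintro ⟨i, j⟩ _
        simp [Finsupp.single_apply]
      · intro e _
        rw [← pair_eqF, prod_pair_eqF]
    rw [step1]
    apply Finset.sum_subset
    · exact Finset.product_subset_product (Finset.range_subset_range.mpr (le_max_right _ _))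
        (Finset.range_subset_range.mpr (le_max_right _ _))
    · rintro ⟨i, j⟩ _ hnp
      rw [Finset.mem_product, Finset.mem_range, Finset.mem_range] at hnp
      push_neg at hnp
      apply sq_van (i, j)
      by_cases hi : i < D + 1
      · have := hnp hi; omega
      · omega
  rw [hLK, hRK]

open MvPowerSeries in
lemma FormalGroupLaw.coeff_zero_F (F : FormalGroupLaw R) : coeff 0 F.F = 0 := by
  have := F.unit_left 0
  rw [Finsupp.single_zero] at this
  simpa using this

open MvPowerSeries in
lemma evF_pair_comp {σ τ : Type} [Fintype σ] [DecidableEq σ] [DecidableEq τ]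
    (F' : MvPowerSeries (Fin 2) R)
    {a : σ → MvPowerSeries τ R} (ha : ∀ i, constantCoeff (a i) = 0)
    {A B : MvPowerSeries σ R} (hA : constantCoeff A = 0) (hB : constantCoeff B = 0) :
    evF a (evF ![A, B] F') = evF ![evF a A, evF a B] F' := by
  have hb : ∀ j : Fin 2, constantCoeff ((![A, B] : Fin 2 → MvPowerSeries σ R) j) = 0 := by
    intro j; fin_cases j <;> simpa
  rw [evF_comp ha hb F']
  have : (fun j => evF a ((![A, B] : Fin 2 → MvPowerSeries σ R) j)) = ![evF a A, evF a B] := by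
    funext j; fin_cases j <;> simp
  rw [this]

open MvPowerSeries in
lemma FormalGroupLaw.assocF (F : FormalGroupLaw R) {τ : Type} [DecidableEq τ]
    {f g h : MvPowerSeries τ R} (hf : constantCoeff f = 0)
    (hg : constantCoeff g = 0) (hh : constantCoeff h = 0) :
    evF ![evF ![f, g] F.F, h] F.F = evF ![f, evF ![g, h] F.F] F.F := by
  classical
  have hF0 := F.coeff_zero_F
  have hX : ∀ i : Fin 3, constantCoeff (X i : MvPowerSeries (Fin 3) R) = 0 := fun i => constantCoeff_X i
  have hA0 : constantCoeff (evF ![(X 0 : MvPowerSeries (Fin 3) R), X 1] F.F) = 0 := by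
    apply constantCoeff_evF
    rwa [← coeff_zero_eq_constantCoeff]
  have hB0 : constantCoeff (evF ![(X 1 : MvPowerSeries (Fin 3) R), X 2] F.F) = 0 := by
    apply constantCoeff_evF
    rwa [← coeff_zero_eq_constantCoeff]
  have Hassoc : evF ![evF ![(X 0 : MvPowerSeries (Fin 3) R), X 1] F.F, X 2] F.F =
      evF ![(X 0 : MvPowerSeries (Fin 3) R), evF ![X 1, X 2] F.F] F.F := by
    have H := F.assoc
    rw [subst2_eq_evF F.F hF0 (hX 0) (hX 1), subst2_eq_evF F.F hF0 (hX 1) (hX 2),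
      subst2_eq_evF F.F hF0 hA0 (hX 2), subst2_eq_evF F.F hF0 (hX 0) hB0] at H
    exact H
  have ha : ∀ i : Fin 3, constantCoeff ((![f, g, h] : Fin 3 → MvPowerSeries τ R) i) = 0 := by
    intro i; fin_cases i <;> simpa
  have happ := congrArg (evF ![f, g, h]) Hassoc
  rw [evF_pair_comp F.F ha hA0 (hX 2), evF_pair_comp F.F ha (hX 0) hB0,
    evF_pair_comp F.F ha (hX 0) (hX 1), evF_pair_comp F.F ha (hX 1) (hX 2)] at happ
  have e0 : evF ![f, g, h] (X 0 : MvPowerSeries (Fin 3) R) = f := by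
    rw [evF_X ha 0]; simp
  have e1 : evF ![f, g, h] (X 1 : MvPowerSeries (Fin 3) R) = g := by
    rw [evF_X ha 1]; simp
  have e2 : evF ![f, g, h] (X 2 : MvPowerSeries (Fin 3) R) = h := by
    rw [evF_X ha 2]; simp
  rw [e0, e1, e2] at happ
  exact happ

open MvPowerSeries in
lemma FormalGroupLaw.evF_zero_right (F : FormalGroupLaw R) {τ : Type} [DecidableEq τ]
    {f : MvPowerSeries τ R} (hf : constantCoeff f = 0) :
    evF ![f, (0 : MvPowerSeries τ R)] F.F = f := by
  classical
  ext d
  rw [coeff_evF]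
  rw [Finset.sum_eq_single (Finsupp.single 0 1)]
  · rw [prod_pair_eqF]
    have h0 : (Finsupp.single 0 1 : Fin 2 →₀ ℕ) 0 = 1 := Finsupp.single_eq_same
    have h1 : (Finsupp.single 0 1 : Fin 2 →₀ ℕ) 1 = 0 := by
      rw [Finsupp.single_apply, if_neg (by decide)]
    rw [h0, h1, pow_zero, mul_one, pow_one, F.unit_left 1, if_pos rfl, one_mul]
  · intro e _ hne
    rw [prod_pair_eqF]
    by_cases h1 : e 1 = 0
    · have he : e = Finsupp.single 0 (e 0) := by
        ext i; fin_cases i <;> simp [Finsupp.single_apply, h1]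
      have hne0 : e 0 ≠ 1 := by
        intro h
        exact hne (by rw [he, h])
      have hcoe : coeff e F.F = if e 0 = 1 then 1 else 0 := by
        conv_lhs => rw [he]
        exact F.unit_left (e 0)
      rw [hcoe, if_neg hne0, zero_mul]
    · rw [zero_pow h1, mul_zero, map_zero, mul_zero]
  · intro hnb
    have hD : wtF d = 0 := by
      by_contra hD
      apply hnb
      rw [mem_boxF]
      intro i
      rw [Finsupp.single_apply]
      split <;> omega
    have hd : d = 0 := wtF_eq_zero hD
    subst hd
    rw [prod_pair_eqF]
    have h0 : (Finsupp.single 0 1 : Fin 2 →₀ ℕ) 0 = 1 := Finsupp.single_eq_same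
    have h1 : (Finsupp.single 0 1 : Fin 2 →₀ ℕ) 1 = 0 := by
      rw [Finsupp.single_apply, if_neg (by decide)]
    rw [h0, h1, pow_zero, mul_one, pow_one, coeff_zero_eq_constantCoeff, hf, mul_zero]

open MvPowerSeries in
/-- the key divisibility: `F(f,g) = g + f·q` for some `q`. -/
lemma FormalGroupLaw.exists_q (F : FormalGroupLaw R) {τ : Type} [DecidableEq τ]
    {f g : MvPowerSeries τ R} (hf : constantCoeff f = 0)
    (hg : constantCoeff g = 0) :
    ∃ q, evF ![f, g] F.F = g + f * q := by
  classical
  have hfg : ∀ i : Fin 2, constantCoeff ((![f, g] : Fin 2 → MvPowerSeries τ R) i) = 0 := by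
    intro i; fin_cases i <;> simpa
  set G : MvPowerSeries (Fin 2) R :=
    fun e => coeff (e + Finsupp.single 0 1) F.F with hGdef
  set F₀ : MvPowerSeries (Fin 2) R :=
    fun e => if e 0 = 0 then coeff e F.F else 0 with hF₀def
  have hcoeffG : ∀ e, coeff e G = coeff (e + Finsupp.single 0 1) F.F := fun e => rfl
  have hcoeffF₀ : ∀ e, coeff e F₀ = if e 0 = 0 then coeff e F.F else 0 := fun e => rfl
  have hsplit : F.F = F₀ + X 0 * G := by
    ext e
    rw [map_add, hcoeffF₀]
    by_cases hle : Finsupp.single 0 1 ≤ e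
    · have he0 : e 0 ≠ 0 := by
        have := Finsupp.single_le_iff.mp hle
        omega
      have hXG : coeff e (X 0 * G) = coeff e F.F := by
        rw [coeff_mul]
        rw [Finset.sum_eq_single_of_mem (Finsupp.single 0 1, e - Finsupp.single 0 1)]
        · rw [coeff_X, if_pos rfl, one_mul, hcoeffG,
            tsub_add_cancel_of_le hle]
        · rw [Finset.HasAntidiagonal.mem_antidiagonal]
          exact add_tsub_cancel_of_le hle
        · rintro ⟨p1, p2⟩ hp hne
          rw [Finset.HasAntidiagonal.mem_antidiagonal] at hp
          by_cases hp1 : p1 = Finsupp.single 0 1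
          · exfalso
            apply hne
            subst hp1
            have : p2 = e - Finsupp.single 0 1 :=
              eq_tsub_of_add_eq (by rw [add_comm]; exact hp)
            rw [this]
          · rw [coeff_X, if_neg hp1, zero_mul]
      rw [hXG, if_neg he0, zero_add]
    · have he0 : e 0 = 0 := by
        have := Finsupp.single_le_iff.not.mp hle
        omega
      have hXG : coeff e (X 0 * G) = 0 := by
        rw [coeff_mul]
        apply Finset.sum_eq_zero
        rintro ⟨p1, p2⟩ hp
        rw [Finset.HasAntidiagonal.mem_antidiagonal] at hp
        have hp1 : p1 ≠ Finsupp.single 0 1 := by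
          intro hp1
          apply hle
          rw [← hp, hp1]
          exact self_le_add_right _ _
        rw [coeff_X, if_neg hp1, zero_mul]
      rw [hXG, if_pos he0, add_zero]
  have hF₀g : evF ![f, g] F₀ = g := by
    ext d
    rw [coeff_evF]
    rw [Finset.sum_eq_single (Finsupp.single 1 1)]
    · rw [prod_pair_eqF]
      have h0 : (Finsupp.single 1 1 : Fin 2 →₀ ℕ) 0 = 0 := by
        rw [Finsupp.single_apply, if_neg (by decide)]
      have h1 : (Finsupp.single 1 1 : Fin 2 →₀ ℕ) 1 = 1 := Finsupp.single_eq_same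
      rw [h0, h1, pow_zero, one_mul, pow_one, hcoeffF₀, if_pos h0, F.unit_right 1,
        if_pos rfl, one_mul]
    · intro e _ hne
      rw [hcoeffF₀]
      by_cases h0 : e 0 = 0
      · have he : e = Finsupp.single 1 (e 1) := by
          ext i; fin_cases i <;> simp [Finsupp.single_apply, h0]
        have hne1 : e 1 ≠ 1 := by
          intro h
          exact hne (by rw [he, h])
        have hcoe : coeff e F.F = if e 1 = 1 then 1 else 0 := by
          conv_lhs => rw [he]
          exact F.unit_right (e 1)
        rw [if_pos h0, hcoe, if_neg hne1, zero_mul]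
      · rw [if_neg h0, zero_mul]
    · intro hnb
      have hD : wtF d = 0 := by
        by_contra hD
        apply hnb
        rw [mem_boxF]
        intro i
        rw [Finsupp.single_apply]
        split <;> omega
      have hd : d = 0 := wtF_eq_zero hD
      subst hd
      rw [prod_pair_eqF]
      have h0 : (Finsupp.single 1 1 : Fin 2 →₀ ℕ) 0 = 0 := by
        rw [Finsupp.single_apply, if_neg (by decide)]
      have h1 : (Finsupp.single 1 1 : Fin 2 →₀ ℕ) 1 = 1 := Finsupp.single_eq_same
      rw [h0, h1, pow_zero, one_mul, pow_one, coeff_zero_eq_constantCoeff, hg, mul_zero]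
  refine ⟨evF ![f, g] G, ?_⟩
  calc evF ![f, g] F.F = evF ![f, g] (F₀ + X 0 * G) := by rw [← hsplit]
    _ = evF ![f, g] F₀ + evF ![f, g] (X 0 * G) := evF_add _ _ _
    _ = g + f * evF ![f, g] G := by
        rw [hF₀g, evF_mul hfg, evF_X hfg 0]
        simp

open MvPowerSeries in
lemma constantCoeff_PSX : constantCoeff (PowerSeries.X : PowerSeries R) = 0 :=
  constantCoeff_X ()

open MvPowerSeries in
lemma FormalGroupLaw.mSeries_cc (F : FormalGroupLaw R) :
    ∀ k, constantCoeff (F.mSeries k) = 0 := by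
  intro k
  induction k with
  | zero => simp [FormalGroupLaw.mSeries]
  | succ k ih =>
    show constantCoeff (subst2 F.F (F.mSeries k) PowerSeries.X) = 0
    rw [subst2_eq_evF F.F F.coeff_zero_F ih constantCoeff_PSX]
    apply constantCoeff_evF
    rw [← coeff_zero_eq_constantCoeff]
    exact F.coeff_zero_F

open MvPowerSeries in
lemma FormalGroupLaw.mSeries_succ (F : FormalGroupLaw R) (k : ℕ) :
    F.mSeries (k + 1) = evF ![F.mSeries k, PowerSeries.X] F.F := by
  show subst2 F.F (F.mSeries k) PowerSeries.X = _
  exact subst2_eq_evF F.F F.coeff_zero_F (F.mSeries_cc k) constantCoeff_PSX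

open MvPowerSeries in
lemma FormalGroupLaw.mSeries_add (F : FormalGroupLaw R) (a : ℕ) :
    ∀ b, F.mSeries (a + b) = evF ![F.mSeries a, F.mSeries b] F.F := by
  intro b
  induction b with
  | zero =>
    show F.mSeries a = evF ![F.mSeries a, (0 : PowerSeries R)] F.F
    exact (F.evF_zero_right (F.mSeries_cc a)).symm
  | succ b ih =>
    have : a + (b + 1) = (a + b) + 1 := by omega
    rw [this, F.mSeries_succ (a + b), ih,
      F.assocF (F.mSeries_cc a) (F.mSeries_cc b) constantCoeff_PSX, ← F.mSeries_succ b]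

open MvPowerSeries in
lemma FormalGroupLaw.mSeries_dvd (F : FormalGroupLaw R) (c : ℕ) :
    ∀ k, F.mSeries c ∣ F.mSeries (c * k) := by
  intro k
  induction k with
  | zero => show F.mSeries c ∣ F.mSeries 0; simp [FormalGroupLaw.mSeries]
  | succ k ih =>
    have hck : c * (k + 1) = c * k + c := by ring
    rw [hck, F.mSeries_add (c * k) c]
    obtain ⟨q, hq⟩ := F.exists_q (F.mSeries_cc (c * k)) (F.mSeries_cc c)
    rw [hq]
    exact dvd_add dvd_rfl (Dvd.dvd.mul_right ih q)

open MvPowerSeries in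
lemma FormalGroupLaw.mSeries_one (F : FormalGroupLaw R) :
    F.mSeries 1 = PowerSeries.X := by
  have h1 : F.mSeries 1 = evF ![F.mSeries 0, PowerSeries.X] F.F := F.mSeries_succ 0
  have h0 : F.mSeries 0 = 0 := rfl
  rw [h1, h0]
  obtain ⟨q, hq⟩ := F.exists_q (f := (0 : PowerSeries R)) (g := PowerSeries.X)
    (by simp) constantCoeff_PSX
  rw [hq, zero_mul, add_zero]

/-- If `s·m ≡ 1 mod N` (with `s, m ≥ 1`), then in `E = R[[y]]/([N](y))` the
element `[m](y)` divides `y`; consequently any localization of `E` (any ring map out of `E`)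
inverting `y` also inverts `[m](y)`. -/
theorem mSeries_dvd_X_mod_NSeries (F : FormalGroupLaw R) (N s m : ℕ)
    (hs : 1 ≤ s) (hm : 1 ≤ m) (h : s * m ≡ 1 [MOD N]) :
    (Ideal.Quotient.mk (Ideal.span {F.mSeries N}) (F.mSeries m) ∣
        Ideal.Quotient.mk (Ideal.span {F.mSeries N}) PowerSeries.X) ∧
      ∀ (L : Type) (_ : CommRing L)
        (φ : (PowerSeries R ⧸ Ideal.span {F.mSeries N}) →+* L),
        IsUnit (φ (Ideal.Quotient.mk (Ideal.span {F.mSeries N}) PowerSeries.X)) →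
          IsUnit (φ (Ideal.Quotient.mk (Ideal.span {F.mSeries N}) (F.mSeries m))) := by
  classical
  have hsm1 : 1 ≤ s * m := Nat.one_le_iff_ne_zero.mpr (by positivity)
  have hdvd : N ∣ s * m - 1 := (Nat.modEq_iff_dvd' hsm1).mp h.symm
  obtain ⟨k, hk⟩ := hdvd
  have hsm : s * m = N * k + 1 := by omega
  -- X = mSeries m * c - mSeries N * (e * q)
  obtain ⟨c, hc⟩ : F.mSeries m ∣ F.mSeries (s * m) := by
    rw [mul_comm]; exact F.mSeries_dvd m s
  obtain ⟨e, he⟩ : F.mSeries N ∣ F.mSeries (N * k) := F.mSeries_dvd N k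
  have hq : ∃ q, F.mSeries (s * m) = PowerSeries.X + F.mSeries (N * k) * q := by
    rw [hsm, F.mSeries_add (N * k) 1, F.mSeries_one]
    exact F.exists_q (F.mSeries_cc (N * k)) constantCoeff_PSX
  obtain ⟨q, hq⟩ := hq
  have hXeq : PowerSeries.X = F.mSeries m * c - F.mSeries N * (e * q) := by
    rw [← hc, ← mul_assoc, ← he]
    rw [hq]; ring
  set I := Ideal.span {F.mSeries N} with hI
  set π := Ideal.Quotient.mk I with hπ
  have hN0 : π (F.mSeries N) = 0 := by
    rw [hπ, Ideal.Quotient.eq_zero_iff_mem, hI]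
    exact Ideal.subset_span (Set.mem_singleton _)
  have hdvdq : π (F.mSeries m) ∣ π PowerSeries.X := by
    refine ⟨π c, ?_⟩
    rw [hXeq, map_sub, map_mul, map_mul, hN0, zero_mul, sub_zero]
  refine ⟨hdvdq, ?_⟩
  intro L _ φ hu
  obtain ⟨c', hc'⟩ := hdvdq
  rw [hc', map_mul] at hu
  exact isUnit_of_mul_isUnit_left hu

end
end

section
/- Let R be a complete local ring with maximal ideal m, and let f ∈ R[[y]] be a power series whose reduction mod m has lowest nonzero term in degree d (a distinguished/Weierstrass situation). Then R[[y]]/(f) is a free R-module of rank d with basis 1, y, …, y^{d−1}. -/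
open PowerSeries

-- uniqueness lemma
theorem ws_unique {R : Type} [CommRing R] (I : Ideal R) [IsHausdorff I R]
    (d : ℕ) (t : PowerSeries R) (ht : ∀ j, coeff j t ∈ I)
    (q r : PowerSeries R) (hr : ∀ j, d ≤ j → coeff j r = 0)
    (heq : q * (X ^ d + t) = r) : q = 0 := by
  have key : ∀ n j, coeff j q ∈ I ^ n := by
    intro n
    induction n with
    | zero => intro j; simp
    | succ n ih =>
      intro j
      have h1 : coeff (j + d) (q * (X ^ d + t)) = 0 := by
        rw [heq]; exact hr _ (by omega)
      have h2 : coeff (j + d) (q * X ^ d) = coeff j q := by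
        simpa using PowerSeries.coeff_mul_X_pow q d j
      have h3 : coeff j q = - coeff (j + d) (q * t) := by
        rw [mul_add] at h1
        rw [map_add, h2] at h1
        exact eq_neg_of_add_eq_zero_left h1
      rw [h3, PowerSeries.coeff_mul]
      refine neg_mem (Ideal.sum_mem _ fun p hp => ?_)
      have : (I ^ n) * I ≤ I ^ (n + 1) := by rw [pow_succ]
      exact this (Ideal.mul_mem_mul (ih p.1) (ht p.2))
  ext j
  simp only [map_zero]
  refine IsHausdorff.haus (inferInstance : IsHausdorff I R) _ fun n => ?_
  rw [SModEq.zero, smul_eq_mul, Ideal.mul_top]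
  exact key n j

theorem ws_exists {R : Type} [CommRing R] (I : Ideal R) [IsAdicComplete I R]
    (d : ℕ) (t : PowerSeries R) (ht : ∀ j, coeff j t ∈ I)
    (g : PowerSeries R) :
    ∃ q : PowerSeries R, ∀ j, d ≤ j → coeff j (g - q * (X ^ d + t)) = 0 := by
  classical
  -- the approximation sequence
  let Q : ℕ → PowerSeries R := fun n => Nat.rec 0
    (fun _ qn => (PowerSeries.mk fun j => coeff (d + j) g)
      - (PowerSeries.mk fun j => coeff (d + j) (qn * t))) n
  have hQ0 : Q 0 = 0 := rfl
  have hQs : ∀ n, Q (n + 1) = (PowerSeries.mk fun j => coeff (d + j) g)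
      - (PowerSeries.mk fun j => coeff (d + j) (Q n * t)) := fun n => rfl
  -- successive differences
  have hdiff : ∀ n j, coeff j (Q (n + 1) - Q n) ∈ I ^ n := by
    intro n
    induction n with
    | zero => intro j; simp
    | succ n ih =>
      intro j
      have : Q (n + 1 + 1) - Q (n + 1)
          = - PowerSeries.mk fun j => coeff (d + j) ((Q (n + 1) - Q n) * t) := by
        ext k
        simp only [hQs (n + 1), hQs n, map_neg, PowerSeries.coeff_mk, map_sub, sub_mul]
        ring
      rw [this]
      simp only [map_neg]
      refine neg_mem ?_
      rw [PowerSeries.coeff_mk, PowerSeries.coeff_mul]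
      refine Ideal.sum_mem _ fun p hp => ?_
      have hle : (I ^ n) * I ≤ I ^ (n + 1) := by rw [pow_succ]
      exact hle (Ideal.mul_mem_mul (ih p.1) (ht p.2))
  have hcauchy : ∀ j {m n : ℕ}, m ≤ n → coeff j (Q n - Q m) ∈ I ^ m := by
    intro j m n hmn
    induction n with
    | zero => interval_cases m; simp
    | succ n ih =>
      rcases Nat.lt_or_ge m (n + 1) with h | h
      · have h1 : Q (n + 1) - Q m = (Q (n + 1) - Q n) + (Q n - Q m) := by ring
        rw [h1, map_add]
        exact add_mem (Ideal.pow_le_pow_right (by omega) (hdiff n j)) (ih (by omega))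
      · have : m = n + 1 := by omega
        subst this; simp
  -- coefficientwise limit
  have hex : ∀ j, ∃ L : R, ∀ n, coeff j (Q n) ≡ L [SMOD (I ^ n • ⊤ : Submodule R R)] := by
    intro j
    refine IsPrecomplete.prec (inferInstance : IsPrecomplete I R) ?_
    intro m n hmn
    rw [SModEq.sub_mem, smul_eq_mul, Ideal.mul_top]
    simpa [map_sub] using neg_mem (hcauchy j hmn)
  choose L hL using hex
  set q : PowerSeries R := PowerSeries.mk L with hq
  have hqQ : ∀ n j, coeff j (q - Q n) ∈ I ^ n := by
    intro n j
    have := hL j n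
    rw [SModEq.sub_mem, smul_eq_mul, Ideal.mul_top] at this
    simpa [map_sub, hq, neg_sub] using neg_mem this
  refine ⟨q, ?_⟩
  -- the fixed point equation
  have hfix : ∀ j, coeff j q + coeff (d + j) (q * t) - coeff (d + j) g = 0 := by
    intro j
    refine IsHausdorff.haus (inferInstance : IsHausdorff I R) _ fun n => ?_
    rw [SModEq.zero, smul_eq_mul, Ideal.mul_top]
    have e1 : coeff j q + coeff (d + j) (q * t) - coeff (d + j) g
        = coeff j (q - Q (n + 1)) + coeff (d + j) ((q - Q n) * t) := by
      rw [hQs]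
      simp [map_sub, sub_mul]
      ring
    rw [e1]
    refine add_mem (Ideal.pow_le_pow_right (by omega) (hqQ (n + 1) j)) ?_
    rw [PowerSeries.coeff_mul]
    refine Ideal.sum_mem _ fun p hp => ?_
    have hle : (I ^ n) * I ≤ I ^ n := Ideal.mul_le_inf.trans inf_le_left
    exact hle (Ideal.mul_mem_mul (hqQ n p.1) (ht p.2))
  intro j hj
  obtain ⟨k, rfl⟩ : ∃ k, j = d + k := ⟨j - d, by omega⟩
  have h2 : coeff (d + k) (q * X ^ d) = coeff k q := by
    have := PowerSeries.coeff_mul_X_pow q d k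
    simpa [add_comm] using this
  have := hfix k
  simp only [map_sub, mul_add, map_add, h2]
  linear_combination -this

lemma coeff_fin_sum {R : Type} [CommRing R] {d : ℕ} (c : Fin d → R) (n : ℕ) :
    coeff n (∑ i : Fin d, c i • (X : PowerSeries R) ^ (i : ℕ))
      = if h : n < d then c ⟨n, h⟩ else 0 := by
  rw [map_sum]
  simp only [LinearMap.map_smul, PowerSeries.coeff_X_pow, smul_eq_mul, mul_ite, mul_one, mul_zero]
  rcases Nat.lt_or_ge n d with h | h
  · rw [dif_pos h, Finset.sum_eq_single (⟨n, h⟩ : Fin d)]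
    · simp
    · intro b _ hb
      rw [if_neg]
      intro he
      exact hb (by ext; simp [← he])
    · simp
  · rw [dif_neg (by omega)]
    refine Finset.sum_eq_zero fun i _ => ?_
    rw [if_neg]
    have := i.2
    omega



/-- Weierstrass division/preparation: if `R` is a complete local ring with
maximal ideal `m` and `f ∈ R[[y]]` reduces mod `m` to a series with lowest nonzero term in
degree `d` (i.e. the first `d` coefficients lie in `m` and the `d`-th coefficient is a
unit), then `R[[y]]/(f)` is a free `R`-module of rank `d` with basis `1, y, …, y^{d−1}`. -/
theorem powerSeries_quotient_basis_of_complete_local (R : Type) [CommRing R]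
    [IsLocalRing R] [IsAdicComplete (IsLocalRing.maximalIdeal R) R]
    (f : PowerSeries R) (d : ℕ)
    (hlow : ∀ i < d, PowerSeries.coeff i f ∈ IsLocalRing.maximalIdeal R)
    (hd : IsUnit (PowerSeries.coeff d f)) :
    ∃ b : Module.Basis (Fin d) R (PowerSeries R ⧸ Ideal.span {f}),
      ∀ i : Fin d, b i = Ideal.Quotient.mk (Ideal.span {f}) (PowerSeries.X ^ (i : ℕ)) := by
  classical
  set I := IsLocalRing.maximalIdeal R with hI
  -- split f into low part and unit times X^d
  set h : PowerSeries R := PowerSeries.mk fun i => coeff (d + i) f with hh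
  have hhu : IsUnit h := by
    rw [PowerSeries.isUnit_iff_constantCoeff]
    simpa [hh, ← PowerSeries.coeff_zero_eq_constantCoeff_apply] using hd
  obtain ⟨u, hu⟩ := hhu
  set hinv : PowerSeries R := ((u⁻¹ : Units (PowerSeries R)) : PowerSeries R) with hhinv
  have hmul : hinv * h = 1 := by rw [hhinv, ← hu]; exact u.inv_mul
  set s : PowerSeries R := f - h * X ^ d with hs
  have hscoeff : ∀ j, coeff j s ∈ I := by
    intro j
    rw [hs, map_sub, PowerSeries.coeff_mul_X_pow']
    rcases Nat.lt_or_ge j d with hj | hj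
    · rw [if_neg (by omega)]
      simpa using hlow j hj
    · rw [if_pos hj]
      have hjd : d + (j - d) = j := by omega
      have : coeff (j - d) h = coeff j f := by
        rw [hh, PowerSeries.coeff_mk, hjd]
      rw [this, sub_self]
      exact zero_mem I
  set t : PowerSeries R := hinv * s with ht
  have htcoeff : ∀ j, coeff j t ∈ I := by
    intro j
    rw [ht, PowerSeries.coeff_mul]
    exact Ideal.sum_mem _ fun p hp => Ideal.mul_mem_left I _ (hscoeff p.2)
  have hfs : f = s + h * X ^ d := by rw [hs]; ring
  have hkey : hinv * f = X ^ d + t := by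
    have e : hinv * f = t + (hinv * h) * X ^ d := by rw [hfs, ht]; ring
    rw [e, hmul, one_mul, add_comm]
  have hf2 : h * (X ^ d + t) = f := by
    rw [← hkey, ← mul_assoc, mul_comm h hinv, hmul, one_mul]
  -- the family
  set v : Fin d → (PowerSeries R ⧸ Ideal.span {f}) :=
    fun i => Ideal.Quotient.mk (Ideal.span {f}) (X ^ (i : ℕ)) with hv
  have hmk := Ideal.Quotient.mkₐ R (Ideal.span {f})
  -- linear independence
  have li : LinearIndependent R v := by
    rw [Fintype.linearIndependent_iff]
    intro c hc
    have hsum : (Ideal.Quotient.mkₐ R (Ideal.span {f}))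
        (∑ i : Fin d, c i • (X : PowerSeries R) ^ (i : ℕ)) = 0 := by
      rw [map_sum]
      simpa [hv, Ideal.Quotient.mkₐ_eq_mk] using hc
    rw [Ideal.Quotient.mkₐ_eq_mk, Ideal.Quotient.eq_zero_iff_mem,
      Ideal.mem_span_singleton'] at hsum
    obtain ⟨a, ha⟩ := hsum
    have heq : (a * h) * (X ^ d + t) = ∑ i : Fin d, c i • (X : PowerSeries R) ^ (i : ℕ) := by
      rw [mul_assoc, hf2, ha]
    have hhigh : ∀ j, d ≤ j → coeff j (∑ i : Fin d, c i • (X : PowerSeries R) ^ (i : ℕ)) = 0 := by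
      intro j hj
      rw [coeff_fin_sum, dif_neg (by omega)]
    have hz : a * h = 0 := ws_unique I d t htcoeff _ _ hhigh heq
    have hr0 : ∑ i : Fin d, c i • (X : PowerSeries R) ^ (i : ℕ) = 0 := by
      rw [← heq, hz, zero_mul]
    intro i
    have := congrArg (coeff (i : ℕ)) hr0
    rw [coeff_fin_sum, dif_pos i.2] at this
    simpa using this
  -- spanning
  have span_top : ⊤ ≤ Submodule.span R (Set.range v) := by
    intro x _
    obtain ⟨g, rfl⟩ := Ideal.Quotient.mk_surjective x
    obtain ⟨q, hq⟩ := ws_exists I d t htcoeff g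
    set r : PowerSeries R := g - q * (X ^ d + t) with hr
    have hrf : g - (q * hinv) * f = r := by
      rw [hr, mul_assoc, hkey]
    have hrlow : ∀ j, d ≤ j → coeff j r = 0 := fun j hj => hq j hj
    have hrpoly : r = ∑ i : Fin d, (coeff (i : ℕ) r) • (X : PowerSeries R) ^ (i : ℕ) := by
      ext n
      rw [coeff_fin_sum]
      split
      · rfl
      · next hn => exact hrlow n (by omega)
    have hgr : Ideal.Quotient.mk (Ideal.span {f}) g = Ideal.Quotient.mk (Ideal.span {f}) r := by
      rw [Ideal.Quotient.mk_eq_mk_iff_sub_mem, ← hrf]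
      have : g - (g - q * hinv * f) = (q * hinv) * f := by ring
      rw [this]
      exact Ideal.mem_span_singleton'.mpr ⟨q * hinv, rfl⟩
    rw [hgr, hrpoly]
    have : Ideal.Quotient.mk (Ideal.span {f})
        (∑ i : Fin d, (coeff (i : ℕ) r) • (X : PowerSeries R) ^ (i : ℕ))
        = ∑ i : Fin d, (coeff (i : ℕ) r) • v i := by
      rw [← Ideal.Quotient.mkₐ_eq_mk R, map_sum]
      simp [hv, Ideal.Quotient.mkₐ_eq_mk]
    rw [this]
    exact Submodule.sum_smul_mem _ _ fun i _ =>
      Submodule.subset_span (Set.mem_range_self i)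
  refine ⟨Module.Basis.mk li span_top, fun i => ?_⟩
  rw [Module.Basis.mk_apply]
end
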